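/- Let 0 < σ < 1 and g = (a_{ij}) ∈ SL(2,ℝ). For every continuous compactly supported function f : ℝ → ℂ, the function (T^σ(g)f)(x) = |a_{12}x + a_{22}|^{-1-σ} f((a_{11}x + a_{21})/(a_{12}x + a_{22})) (defined for x with a_{12}x + a_{22} ≠ 0) satisfies B(T^σ(g)f, T^σ(g)f) = B(f,f), where B(f₁,f₂) = ∬_{ℝ×ℝ} f₁(x) · conj(f₂(y)) · |x − y|^{-(1-σ)} dx dy. -/

import Mathlib

open MeasureTheory Complex ContinuousLinearMap

noncomputable section

/-- The complementary series pairing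
`B(f₁,f₂) = ∬_{ℝ×ℝ} f₁(x) conj(f₂(y)) |x−y|^{-(1-σ)} dx dy`. -/
def complementaryFormR (σ : ℝ) (f₁ f₂ : ℝ → ℂ) : ℂ :=
  ∫ p : ℝ × ℝ, f₁ p.1 * (starRingEnd ℂ) (f₂ p.2) *
    (((|p.1 - p.2| : ℝ) ^ (-(1 - σ)) : ℝ) : ℂ)

/-- The complementary series operator `T^σ(g)` of `SL(2,ℝ)`. -/
def complementarySeriesR (σ : ℝ) (g : Matrix.SpecialLinearGroup (Fin 2) ℝ)
    (f : ℝ → ℂ) : ℝ → ℂ := fun x =>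
  (((|g.1 0 1 * x + g.1 1 1| : ℝ) ^ (-1 - σ) : ℝ) : ℂ) *
    f ((g.1 0 0 * x + g.1 1 0) / (g.1 0 1 * x + g.1 1 1))

lemma det_aux (u v : ℝ) :
    (((1 : ℝ →L[ℝ] ℝ).smulRight u).prodMap ((1 : ℝ →L[ℝ] ℝ).smulRight v)).det = u * v := by
  have h : LinearMap.toMatrix (Module.Basis.finTwoProd ℝ) (Module.Basis.finTwoProd ℝ)
      ((((1 : ℝ →L[ℝ] ℝ).smulRight u).prodMap ((1 : ℝ →L[ℝ] ℝ).smulRight v)) :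
        (ℝ × ℝ) →ₗ[ℝ] ℝ × ℝ) = !![u, 0; 0, v] := by
    ext i j
    fin_cases i <;> fin_cases j <;>
      simp [LinearMap.toMatrix_apply, Module.Basis.coe_finTwoProd_repr, Module.Basis.finTwoProd_zero,
        Module.Basis.finTwoProd_one]
  rw [ContinuousLinearMap.det, ← LinearMap.det_toMatrix (Module.Basis.finTwoProd ℝ), h,
    Matrix.det_fin_two_of]
  ring

lemma rpow_key (σ x y u v : ℝ) (hσ₀ : 0 < σ) (hσ₁ : σ < 1) (hu : u ≠ 0) (hv : v ≠ 0) :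
    |(u ^ 2)⁻¹ * (v ^ 2)⁻¹| * |(x - y) / (u * v)| ^ (-(1 - σ))
      = |u| ^ (-1 - σ) * (|v| ^ (-1 - σ) * |x - y| ^ (-(1 - σ))) := by
  have hu' : (0 : ℝ) < |u| := abs_pos.2 hu
  have hv' : (0 : ℝ) < |v| := abs_pos.2 hv
  have h2 : ∀ w : ℝ, |(w ^ 2)⁻¹| = |w| ^ (-2 : ℝ) := by
    intro w
    rw [abs_inv, _root_.abs_pow, ← Real.rpow_natCast |w| 2, ← Real.rpow_neg (abs_nonneg w)]
    norm_num
  have habs : |(u ^ 2)⁻¹ * (v ^ 2)⁻¹| = |u| ^ (-2 : ℝ) * |v| ^ (-2 : ℝ) := by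
    rw [abs_mul, h2 u, h2 v]
  rw [habs, abs_div, abs_mul,
    Real.div_rpow (abs_nonneg _) (mul_nonneg (abs_nonneg _) (abs_nonneg _)),
    Real.mul_rpow (abs_nonneg u) (abs_nonneg v)]
  have e1 : |u| ^ (-1 - σ) = |u| ^ (-2 : ℝ) / |u| ^ (-(1 - σ)) := by
    rw [← Real.rpow_sub hu']; ring_nf
  have e2 : |v| ^ (-1 - σ) = |v| ^ (-2 : ℝ) / |v| ^ (-(1 - σ)) := by
    rw [← Real.rpow_sub hv']; ring_nf
  rw [e1, e2]
  have n1 : |u| ^ (-(1 - σ)) ≠ 0 := (Real.rpow_pos_of_pos hu' _).ne'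
  have n2 : |v| ^ (-(1 - σ)) ≠ 0 := (Real.rpow_pos_of_pos hv' _).ne'
  field_simp

/-- For `0 < σ < 1`, `g ∈ SL(2,ℝ)`, and every continuous compactly supported `f : ℝ → ℂ`,
`B(T^σ(g)f, T^σ(g)f) = B(f,f)`: unitarity of the complementary series of `SL(2,ℝ)`. -/
theorem complementarySeriesR_unitary (σ : ℝ) (hσ₀ : 0 < σ) (hσ₁ : σ < 1)
    (g : Matrix.SpecialLinearGroup (Fin 2) ℝ) (f : ℝ → ℂ)
    (hf : Continuous f) (hsupp : HasCompactSupport f) :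
    complementaryFormR σ (complementarySeriesR σ g f) (complementarySeriesR σ g f)
      = complementaryFormR σ f f := by
  set a := g.1 0 0 with ha
  set b := g.1 0 1 with hb
  set c := g.1 1 0 with hc
  set d := g.1 1 1 with hd
  have hdet : a * d - b * c = 1 := by
    have := g.2
    rw [Matrix.det_fin_two] at this
    exact this
  have hbd : ¬ (b = 0 ∧ d = 0) := by rintro ⟨h1, h2⟩; rw [h1, h2] at hdet; simp at hdet
  have hab : ¬ (a = 0 ∧ b = 0) := by rintro ⟨h1, h2⟩; rw [h1, h2] at hdet; simp at hdet
  set φ : ℝ → ℝ := fun x => (a * x + c) / (b * x + d) with hφ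
  set s : Set ℝ := {x | b * x + d ≠ 0} with hs
  set t : Set ℝ := {y | a - b * y ≠ 0} with ht
  have hsm : MeasurableSet s :=
    (isOpen_compl_iff.mpr (isClosed_eq (by fun_prop) continuous_const)).measurableSet
  -- injectivity
  have hinj : Set.InjOn φ s := by
    intro x hx y hy hxy
    have hx' : b * x + d ≠ 0 := hx
    have hy' : b * y + d ≠ 0 := hy
    rw [hφ] at hxy
    beta_reduce at hxy
    rw [div_eq_div_iff hx' hy'] at hxy
    nlinarith [hxy, hdet]
  -- derivative
  have hderiv : ∀ x ∈ s, HasDerivAt φ (((b * x + d) ^ 2)⁻¹) x := by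
    intro x hx
    have hx' : b * x + d ≠ 0 := hx
    have h1 : HasDerivAt (fun x : ℝ => a * x + c) a x := by
      simpa using ((hasDerivAt_id x).const_mul a).add_const c
    have h2 : HasDerivAt (fun x : ℝ => b * x + d) b x := by
      simpa using ((hasDerivAt_id x).const_mul b).add_const d
    have := h1.div h2 hx'
    refine this.congr_deriv ?_
    rw [div_eq_iff (pow_ne_zero 2 hx'), inv_mul_cancel₀ (pow_ne_zero 2 hx')]
    linear_combination hdet
  -- image
  have himg : φ '' s = t := by
    ext y
    constructor
    · rintro ⟨x, hx, rfl⟩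
      intro hy
      have hx' : b * x + d ≠ 0 := hx
      rw [hφ] at hy
      rw [sub_eq_zero] at hy
      field_simp at hy
      nlinarith [hy, hdet]
    · intro hy
      have hy' : a - b * y ≠ 0 := hy
      have key1 : b * ((d * y - c) / (a - b * y)) + d = (a - b * y)⁻¹ := by
        field_simp
        linear_combination hdet
      have key2 : a * ((d * y - c) / (a - b * y)) + c = y / (a - b * y) := by
        rw [mul_div_assoc', div_add' _ _ _ hy', div_left_inj' hy']
        linear_combination y * hdet
      refine ⟨(d * y - c) / (a - b * y), ?_, ?_⟩
      · show b * ((d * y - c) / (a - b * y)) + d ≠ 0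
        rw [key1]; exact inv_ne_zero hy'
      · show (a * ((d * y - c) / (a - b * y)) + c) / (b * ((d * y - c) / (a - b * y)) + d) = y
        rw [key1, key2, div_inv_eq_mul, div_mul_cancel₀ _ hy']
  -- difference identity
  have hsub : ∀ x ∈ s, ∀ y ∈ s, φ x - φ y = (x - y) / ((b * x + d) * (b * y + d)) := by
    intro x hx y hy
    have hx' : b * x + d ≠ 0 := hx
    have hy' : b * y + d ≠ 0 := hy
    rw [hφ]
    beta_reduce
    rw [div_sub_div _ _ hx' hy']
    congr 1
    linear_combination (x - y) * hdet
  -- setup for the 2D change of variables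
  set Φ : ℝ × ℝ → ℝ × ℝ := fun p => (φ p.1, φ p.2) with hΦ
  set F' : ℝ × ℝ → (ℝ × ℝ) →L[ℝ] (ℝ × ℝ) := fun p =>
    ((1 : ℝ →L[ℝ] ℝ).smulRight (((b * p.1 + d) ^ 2)⁻¹)).prodMap
      ((1 : ℝ →L[ℝ] ℝ).smulRight (((b * p.2 + d) ^ 2)⁻¹)) with hF'
  have hΦd : ∀ p ∈ s ×ˢ s, HasFDerivWithinAt Φ (F' p) (s ×ˢ s) p := by
    intro p hp
    show HasFDerivWithinAt (Prod.map φ φ) (F' p) (s ×ˢ s) p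
    exact (HasFDerivAt.prodMap p (hasDerivAt_iff_hasFDerivAt.mp (hderiv _ hp.1))
      (hasDerivAt_iff_hasFDerivAt.mp (hderiv _ hp.2))).hasFDerivWithinAt
  have hΦinj : Set.InjOn Φ (s ×ˢ s) := hinj.prodMap hinj
  have himage2 : Φ '' (s ×ˢ s) = t ×ˢ t := by
    rw [← himg]; exact (Set.prod_image_image_eq).symm
  have hT : ∀ x : ℝ, complementarySeriesR σ g f x
      = ((|b * x + d| ^ (-1 - σ) : ℝ) : ℂ) * f (φ x) := fun x => rfl
  have hTzero : ∀ x : ℝ, x ∉ s → complementarySeriesR σ g f x = 0 := by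
    intro x hx
    rw [hT x]
    have hx0 : b * x + d = 0 := not_not.mp hx
    rw [hx0, abs_zero, Real.zero_rpow (by linarith : (-1 - σ) ≠ 0)]
    simp
  set H : ℝ × ℝ → ℂ := fun p => f p.1 * (starRingEnd ℂ) (f p.2) *
    (((|p.1 - p.2| : ℝ) ^ (-(1 - σ)) : ℝ) : ℂ) with hH
  set G : ℝ × ℝ → ℂ := fun p => complementarySeriesR σ g f p.1 *
    (starRingEnd ℂ) (complementarySeriesR σ g f p.2) *
    (((|p.1 - p.2| : ℝ) ^ (-(1 - σ)) : ℝ) : ℂ) with hG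
  have hGzero : ∀ p : ℝ × ℝ, p ∉ s ×ˢ s → G p = 0 := by
    intro p hp
    rcases not_and_or.mp (by simpa [Set.mem_prod] using hp) with h | h <;>
      simp [hG, hTzero _ h]
  -- t-complement is null
  have htc : volume ((t : Set ℝ)ᶜ) = 0 := by
    refine Set.Subsingleton.measure_zero ?_ _
    intro p hp q hq
    have hp' : a - b * p = 0 := not_not.mp hp
    have hq' : a - b * q = 0 := not_not.mp hq
    have hb0 : b ≠ 0 := by
      intro h
      have haz : a = b * p := by linarith
      rw [h, zero_mul] at haz
      exact hab ⟨haz, h⟩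
    have : b * (p - q) = 0 := by linarith
    have := mul_eq_zero.mp this
    rcases this with h | h
    · exact absurd h hb0
    · linarith
  have hTT : volume (((t ×ˢ t : Set (ℝ × ℝ)))ᶜ) = 0 := by
    have hsubset : ((t ×ˢ t : Set (ℝ × ℝ)))ᶜ ⊆ (tᶜ ×ˢ Set.univ) ∪ (Set.univ ×ˢ tᶜ) := by
      intro p hp
      simp only [Set.mem_compl_iff, Set.mem_prod, not_and_or] at hp
      rcases hp with h | h
      · exact Or.inl ⟨h, trivial⟩
      · exact Or.inr ⟨trivial, h⟩
    refine measure_mono_null hsubset (measure_union_null ?_ ?_)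
    · rw [MeasureTheory.Measure.volume_eq_prod, Measure.prod_prod, htc, zero_mul]
    · rw [MeasureTheory.Measure.volume_eq_prod, Measure.prod_prod, htc, mul_zero]
  have h_ae : ∀ᵐ p : ℝ × ℝ, p ∉ (t ×ˢ t : Set (ℝ × ℝ)) → H p = 0 := by
    have hmem : ∀ᵐ p : ℝ × ℝ, p ∈ (t ×ˢ t : Set (ℝ × ℝ)) := by
      rw [MeasureTheory.ae_iff]
      exact hTT
    filter_upwards [hmem] with p hp hnp
    exact absurd hp hnp
  -- pointwise identity
  have hpoint : Set.EqOn G (fun p => |(F' p).det| • H (Φ p)) (s ×ˢ s) := by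
    intro p hp
    obtain ⟨hp1, hp2⟩ := hp
    have hx' : b * p.1 + d ≠ 0 := hp1
    have hy' : b * p.2 + d ≠ 0 := hp2
    have key := rpow_key σ p.1 p.2 (b * p.1 + d) (b * p.2 + d) hσ₀ hσ₁ hx' hy'
    have keyC := congrArg (Complex.ofReal) key
    push_cast at keyC
    simp only [hG, hH, hF', hΦ, det_aux, hT p.1, hT p.2, Complex.real_smul,
      hsub p.1 hp1 p.2 hp2, map_mul, Complex.conj_ofReal]
    push_cast
    linear_combination (-(f (φ p.1) * (starRingEnd ℂ) (f (φ p.2)))) * keyC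
  -- assemble
  calc complementaryFormR σ (complementarySeriesR σ g f) (complementarySeriesR σ g f)
      = ∫ p : ℝ × ℝ, G p := rfl
    _ = ∫ p in s ×ˢ s, G p :=
        (setIntegral_eq_integral_of_forall_compl_eq_zero hGzero).symm
    _ = ∫ p in s ×ˢ s, |(F' p).det| • H (Φ p) :=
        setIntegral_congr_fun (hsm.prod hsm) hpoint
    _ = ∫ p in Φ '' (s ×ˢ s), H p :=
        (integral_image_eq_integral_abs_det_fderiv_smul volume (hsm.prod hsm) hΦd hΦinj H).symm
    _ = ∫ p in (t ×ˢ t : Set (ℝ × ℝ)), H p := by rw [himage2]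
    _ = ∫ p : ℝ × ℝ, H p := setIntegral_eq_integral_of_ae_compl_eq_zero h_ae
    _ = complementaryFormR σ f f := rfl

end
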